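/- Let T : E × ℰ → [0,1] be a Markov transition kernel such that T²(z,{z}) = 1 for every z ∈ E. Then there exists an involution τ : E → E such that T(z,·) = δ_{τ(z)} for every z ∈ E. -/

import Mathlib

open MeasureTheory ProbabilityTheory

lemma eq_dirac_of_measure_singleton_eq_one
    {E : Type*} [MeasurableSpace E] [MeasurableSingletonClass E]
    (μ : Measure E) [IsProbabilityMeasure μ] {a : E} (h : μ {a} = 1) :
    μ = Measure.dirac a := by
  ext s hs
  rw [Measure.dirac_apply' a hs]
  by_cases ha : a ∈ s
  · have hc : μ sᶜ = 0 := by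
      have hsub : sᶜ ⊆ {a}ᶜ := Set.compl_subset_compl.2 (Set.singleton_subset_iff.2 ha)
      have : μ {a}ᶜ = 0 := by
        rw [prob_compl_eq_zero_iff (measurableSet_singleton a)]; exact h
      exact le_antisymm (le_trans (measure_mono hsub) this.le) zero_le
    have := prob_compl_eq_zero_iff hs |>.1 hc
    simp [this, Set.indicator_of_mem ha]
  · have : μ s = 0 := by
      have hsub : s ⊆ {a}ᶜ := fun x hx => by
        simp only [Set.mem_compl_iff, Set.mem_singleton_iff]
        rintro rfl; exact ha hx
      have h0 : μ {a}ᶜ = 0 := by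
        rw [prob_compl_eq_zero_iff (measurableSet_singleton a)]; exact h
      exact le_antisymm (le_trans (measure_mono hsub) h0.le) zero_le
    simp [this, Set.indicator_of_notMem ha]

/-- If a Markov kernel `T` satisfies `T²(z, {z}) = 1` for every `z`, then there is an
involution `τ : E → E` with `T(z, ·) = δ_{τ(z)}` for every `z`. -/
theorem markov_kernel_two_step_diagonal_is_deterministic_involution
    {E : Type*} [MeasurableSpace E] [MeasurableSingletonClass E]
    (T : Kernel E E) [IsMarkovKernel T]
    (h : ∀ z : E, (T ∘ₖ T) z {z} = 1) :
    ∃ τ : E → E, Function.Involutive τ ∧ ∀ z : E, T z = Measure.dirac (τ z) := by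
  -- For every z, the set of z' with T z' {z} = 1 has full T z-measure, hence is nonempty.
  have key : ∀ z : E, ∃ w : E, T w = Measure.dirac z := by
    intro z
    have hcomp : (∫⁻ z', T z' {z} ∂(T z)) = 1 := by
      rw [← Kernel.comp_apply' T T z (measurableSet_singleton z)]
      exact h z
    have hmeas : Measurable fun z' => T z' {z} :=
      T.measurable_coe (measurableSet_singleton z)
    have hle : ∀ z', T z' {z} ≤ 1 := fun z' => prob_le_one
    -- ∫⁻ (1 - f) = 0
    have hsub : (∫⁻ z', (1 - T z' {z}) ∂(T z)) = 0 := by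
      rw [lintegral_sub hmeas (by rw [hcomp]; exact ENNReal.one_ne_top)
        (Filter.Eventually.of_forall hle)]
      simp [hcomp]
    have hae : ∀ᵐ z' ∂(T z), (1 : ENNReal) - T z' {z} = 0 := by
      have := (lintegral_eq_zero_iff (Measurable.const_sub hmeas 1)).1 hsub
      filter_upwards [this] with z' hz' using hz'
    have hae1 : ∀ᵐ z' ∂(T z), T z' {z} = 1 := by
      filter_upwards [hae] with z' hz'
      have : (1 : ENNReal) ≤ T z' {z} := tsub_eq_zero_iff_le.1 hz'
      exact le_antisymm (hle z') this
    have hne : ∃ z', T z' {z} = 1 := by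
      by_contra hcon
      push_neg at hcon
      have : ∀ᵐ z' ∂(T z), False := by
        filter_upwards [hae1] with z' hz'
        exact hcon z' hz'
      exact (IsProbabilityMeasure.ne_zero (T z)) (by simpa using this)
    obtain ⟨w, hw⟩ := hne
    exact ⟨w, eq_dirac_of_measure_singleton_eq_one _ hw⟩
  choose σ hσ using key
  -- σ z satisfies T (σ z) = δ_z. Define τ z := σ z; show T z = δ_{σ z}.
  have hTz : ∀ z : E, T z = Measure.dirac (σ z) := by
    intro z
    have h2 : (T ∘ₖ T) (σ z) {σ z} = 1 := h (σ z)
    rw [Kernel.comp_apply' T T (σ z) (measurableSet_singleton (σ z)), hσ z,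
      lintegral_dirac' _ (T.measurable_coe (measurableSet_singleton (σ z)))] at h2
    exact eq_dirac_of_measure_singleton_eq_one _ h2
  refine ⟨σ, ?_, hTz⟩
  intro z
  have h1 : Measure.dirac (σ (σ z)) = Measure.dirac z := by
    rw [← hTz (σ z), hσ z]
  have := congrArg (fun μ : Measure E => μ {z}) h1
  simp only [Measure.dirac_apply' _ (measurableSet_singleton z)] at this
  by_contra hne
  rw [Set.indicator_of_notMem (by simpa using hne)] at this
  simp at this
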